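/- arXiv:1804.06249 — 2 statements merged into one kernel-verified Lean document; each statement's English description precedes it below -/
import Mathlib

section
/- Let b : Ω × ℝ → ℝ^N satisfy: (i) b is a locally bounded Borel function; (ii) for L^N-a.e. x ∈ Ω, b(x,·) is continuous on ℝ; (iii) for every t ∈ ℝ, b(·,t) ∈ DM^∞_loc(Ω); (iv) σ := ⋁_{t∈ℝ} |Div_x b(·,t)| is a Radon measure. Extend b by 0 outside Ω and set B(x,t) := ∫_0^t b(x,s) ds. Then for every t ∈ ℝ, B(·,t) ∈ DM^∞_loc(Ω), Div_x B(·,t) is absolutely continuous with respect to σ with Radon–Nikodým derivative F(·,t) satisfying F(x,t) = ∫_0^t f(x,s) ds for σ-a.e. x ∈ Ω, and for every t,s ∈ ℝ one has |F(x,t) − F(x,s)| ≤ |t−s| for σ-a.e. x ∈ Ω. -/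
open MeasureTheory Metric Filter Set Function
open scoped Topology ENNReal InnerProductSpace NNReal

noncomputable section

/-- Euclidean space `ℝ^N`. -/
abbrev Euc (N : ℕ) : Type := EuclideanSpace ℝ (Fin N)

variable {N : ℕ}

/-- A smooth test function compactly supported in the open set `Ω`. -/
def TestFun (Ω : Set (Euc N)) (φ : Euc N → ℝ) : Prop :=
  ContDiff ℝ (⊤ : ℕ∞) φ ∧ HasCompactSupport φ ∧ tsupport φ ⊆ Ω

/-- `z` is the approximate limit of `u` at `x₀`. -/
def ApproxLimitAt (u : Euc N → ℝ) (x₀ : Euc N) (z : ℝ) : Prop :=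
  Tendsto (fun r : ℝ =>
      (volume (ball x₀ r)).toReal⁻¹ * ∫ x in ball x₀ r, |u x - z|)
    (𝓝[>] (0:ℝ)) (𝓝 0)

/-- `z` is the approximate limit of the vector field `A` at `x₀`. -/
def VApproxLimitAt (A : Euc N → Euc N) (x₀ : Euc N) (z : Euc N) : Prop :=
  Tendsto (fun r : ℝ =>
      (volume (ball x₀ r)).toReal⁻¹ * ∫ x in ball x₀ r, ‖A x - z‖)
    (𝓝[>] (0:ℝ)) (𝓝 0)

/-- `x₀` is an approximate jump point of `u`, with approximate limit `a` on the
positive side of the unit normal `ν` and `b` on the negative side. -/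
def ApproxJumpAt (u : Euc N → ℝ) (x₀ : Euc N) (a b : ℝ) (ν : Euc N) : Prop :=
  ‖ν‖ = 1 ∧ a ≠ b ∧
  Tendsto (fun r : ℝ => (volume (ball x₀ r)).toReal⁻¹ *
      ∫ x in {y | y ∈ ball x₀ r ∧ 0 < ⟪y - x₀, ν⟫_ℝ}, |u x - a|) (𝓝[>] (0:ℝ)) (𝓝 0) ∧
  Tendsto (fun r : ℝ => (volume (ball x₀ r)).toReal⁻¹ *
      ∫ x in {y | y ∈ ball x₀ r ∧ ⟪y - x₀, ν⟫_ℝ < 0}, |u x - b|) (𝓝[>] (0:ℝ)) (𝓝 0)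

/-- A symmetric smooth convolution kernel supported in the unit ball. -/
structure IsMollifier (ρ : Euc N → ℝ) : Prop where
  smooth : ContDiff ℝ (⊤ : ℕ∞) ρ
  nonneg : ∀ x, 0 ≤ ρ x
  symmetric : ∀ x, ρ (-x) = ρ x
  supp : tsupport ρ ⊆ closedBall 0 1
  integral_one : ∫ x, ρ x = 1

/-- The rescaled kernel `ρ_ε(x) = ε^{-N} ρ(x/ε)`. -/
def mollK (ρ : Euc N → ℝ) (ε : ℝ) (x : Euc N) : ℝ := (ε ^ N)⁻¹ * ρ (ε⁻¹ • x)

/-- Mollification `ρ_ε * u` of a scalar function. -/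
def mollify (ρ : Euc N → ℝ) (ε : ℝ) (u : Euc N → ℝ) (x : Euc N) : ℝ :=
  ∫ y, mollK ρ ε (x - y) * u y

/-- Mollification `ρ_ε * A` of a vector field. -/
def mollifyV (ρ : Euc N → ℝ) (ε : ℝ) (A : Euc N → Euc N) (x : Euc N) : Euc N :=
  ∫ y, mollK ρ ε (x - y) • A y

/-- The distributional divergence of `A` on the open set `Ω` is the Radon
measure `μp - μn` (so in particular `A ∈ 𝒟ℳ^∞_loc(Ω)`). -/
def HasDivMeasureOn (Ω : Set (Euc N)) (A : Euc N → Euc N)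
    (μp μn : Measure (Euc N)) : Prop :=
  (∀ K : Set (Euc N), K ⊆ Ω → IsCompact K → μp K + μn K < ⊤) ∧
  ∀ φ : Euc N → ℝ, TestFun Ω φ →
    (∫ x in Ω, ⟪A x, gradient φ x⟫_ℝ) = -((∫ x, φ x ∂μp) - (∫ x, φ x ∂μn))

/-- Assumptions (i)–(iv) on the vector field `b(x,t)` (except for boundedness,
which is stated separately): Borel measurability; continuity in `t` for a.e.
`x`; for every `t ∈ ℝ`, `b(·,t) ∈ 𝒟ℳ^∞_loc(Ω)` with
`Div_x b(·,t) = f(·,t) σ`, where `σ` is a Radon measure on `Ω` (the least upper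
bound `⋁_t |Div_x b(·,t)|`) and `f(·,t)` is the Radon–Nikodým derivative, with
`|f(·,t)| ≤ 1` `σ`-a.e. -/
structure DivAssumptions (Ω : Set (Euc N)) (b : Euc N → ℝ → Euc N)
    (σ : Measure (Euc N)) (f : Euc N → ℝ → ℝ) : Prop where
  isOpen_dom : IsOpen Ω
  meas_b : Measurable (uncurry b)
  cont_b : ∀ᵐ x, x ∈ Ω → Continuous fun t => b x t
  meas_f : Measurable (uncurry f)
  bound_f : ∀ t : ℝ, ∀ᵐ x ∂σ, |f x t| ≤ 1
  locFin_σ : ∀ K : Set (Euc N), K ⊆ Ω → IsCompact K → σ K < ⊤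
  supp_σ : σ Ωᶜ = 0
  div_eq : ∀ t : ℝ, ∀ φ : Euc N → ℝ, TestFun Ω φ →
    (∫ x in Ω, ⟪b x t, gradient φ x⟫_ℝ) = -∫ x, φ x * f x t ∂σ

/-- `B(x,t) := ∫_0^t b(x,s) ds`. -/
def Bfield (b : Euc N → ℝ → Euc N) (x : Euc N) (t : ℝ) : Euc N :=
  ∫ s in (0:ℝ)..t, b x s

/-- `F(x,t) := ∫_0^t f(x,s) ds`. -/
def Ffun (f : Euc N → ℝ → ℝ) (x : Euc N) (t : ℝ) : ℝ :=
  ∫ s in (0:ℝ)..t, f x s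

/-- The positive part `(F(·,t))⁺ σ` of the measure `Div_x B(·,t) = F(·,t) σ`. -/
def divBpos (σ : Measure (Euc N)) (f : Euc N → ℝ → ℝ) (t : ℝ) : Measure (Euc N) :=
  σ.withDensity fun x => ENNReal.ofReal (Ffun f x t)

/-- The negative part `(F(·,t))⁻ σ` of the measure `Div_x B(·,t) = F(·,t) σ`. -/
def divBneg (σ : Measure (Euc N)) (f : Euc N → ℝ → ℝ) (t : ℝ) : Measure (Euc N) :=
  σ.withDensity fun x => ENNReal.ofReal (-(Ffun f x t))

/-- `u` is a function of locally bounded variation on `Ω`: the distributional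
gradient is the vector-valued Radon measure `Du = θu |Du|`, where `|Du| = Dνu`
is its total variation and `θu` the polar vector. -/
structure IsBVOn (Ω : Set (Euc N)) (u : Euc N → ℝ)
    (Dνu : Measure (Euc N)) (θu : Euc N → Euc N) : Prop where
  locInt : LocallyIntegrableOn u Ω
  meas_θ : Measurable θu
  unit_θ : ∀ᵐ x ∂Dνu, ‖θu x‖ = 1
  locFin : ∀ K : Set (Euc N), K ⊆ Ω → IsCompact K → Dνu K < ⊤
  suppDu : Dνu Ωᶜ = 0
  ibp : ∀ φ : Euc N → ℝ, TestFun Ω φ →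
    (∫ x in Ω, u x • gradient φ x) = -∫ x, φ x • θu x ∂Dνu

/-- `u ∈ L^∞_loc(Ω)`. -/
def LocBddOn (Ω : Set (Euc N)) (u : Euc N → ℝ) : Prop :=
  ∀ K : Set (Euc N), K ⊆ Ω → IsCompact K →
    ∃ C : ℝ, ∀ᵐ x ∂(volume.restrict K), |u x| ≤ C

/-- `up`/`um` are (precise representatives of) the one–sided approximate limits
`u⁺ ≥ u⁻` of `u`, with the convention `u⁺ = u⁻ = ũ` at points of approximate
continuity; this is required `μ`-a.e. -/
def PreciseReps (Ω : Set (Euc N)) (u up um : Euc N → ℝ)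
    (μ : Measure (Euc N)) : Prop :=
  ∀ᵐ x ∂μ, x ∈ Ω →
    ((ApproxLimitAt u x (up x) ∧ um x = up x) ∨
      ∃ ν : Euc N, ApproxJumpAt u x (up x) (um x) ν)

/-- `τ` is the Anzellotti normal trace (w.r.t. the outer normal) on `∂O` of the
field `A` whose distributional divergence is the measure `μp - μn`:
`∫_O ⟨A, ∇φ⟩ dx + ∫_O φ d(Div A) = ∫_{∂O} φ τ dH^{N-1}` for all test `φ`. -/
def IsAnzTrace (A : Euc N → Euc N) (μp μn : Measure (Euc N))
    (O : Set (Euc N)) (τ : Euc N → ℝ) : Prop :=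
  ∀ φ : Euc N → ℝ, ContDiff ℝ (⊤ : ℕ∞) φ → HasCompactSupport φ →
    (∫ x in O, ⟪A x, gradient φ x⟫_ℝ) +
      ((∫ x in O, φ x ∂μp) - (∫ x in O, φ x ∂μn))
      = ∫ x in frontier O, φ x * τ x ∂(μH[(N:ℝ) - 1])

/-- An oriented countably `H^{N-1}`-rectifiable set `S`, presented (following
Ambrosio–Crippa–Maniglia) through pairwise disjoint Borel pieces `Nset i ⊆ S`
covering `H^{N-1}`-almost all of `S`, each contained in the boundaries of a
bounded open set `O i` (the side of the inner normal trace) and of a bounded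
open set `O' i` (the side of the outer normal trace). -/
structure OrientedCover (N : ℕ) (S : Set (Euc N)) where
  O : ℕ → Set (Euc N)
  O' : ℕ → Set (Euc N)
  Nset : ℕ → Set (Euc N)
  open_O : ∀ i, IsOpen (O i)
  open_O' : ∀ i, IsOpen (O' i)
  bdd_O : ∀ i, Bornology.IsBounded (O i)
  bdd_O' : ∀ i, Bornology.IsBounded (O' i)
  meas_N : ∀ i, MeasurableSet (Nset i)
  disj_N : Pairwise (fun i j => Disjoint (Nset i) (Nset j))
  N_sub : ∀ i, Nset i ⊆ frontier (O i) ∩ frontier (O' i)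
  N_sub_S : ∀ i, Nset i ⊆ S
  cover : μH[(N:ℝ) - 1] (S \ ⋃ i, Nset i) = 0
  finH_O : ∀ i, μH[(N:ℝ) - 1] (frontier (O i)) < ⊤
  finH_O' : ∀ i, μH[(N:ℝ) - 1] (frontier (O' i)) < ⊤

/-- `(βm, βp)` are the weak normal traces `Tr^∓` of `A` on the oriented
countably rectifiable set presented by `cov`; `μp - μn` is the divergence
measure of `A`. -/
def HasNormalTraces {S : Set (Euc N)} (cov : OrientedCover N S)
    (A : Euc N → Euc N) (μp μn : Measure (Euc N)) (βm βp : Euc N → ℝ) : Prop :=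
  (∀ i, ∃ τ, IsAnzTrace A μp μn (cov.O i) τ ∧ EqOn βm τ (cov.Nset i)) ∧
  (∀ i, ∃ τ, IsAnzTrace A μp μn (cov.O' i) τ ∧ EqOn βp (fun x => -τ x) (cov.Nset i))

/-- The measure-theoretic interior `E^1` of `E` (points of density one). -/
def MeasInt (E : Set (Euc N)) : Set (Euc N) :=
  {x | Tendsto (fun r : ℝ => volume (E ∩ ball x r) / volume (ball x r))
    (𝓝[>] (0:ℝ)) (𝓝 1)}

/-- The measure-theoretic exterior `E^0` of `E` (points of density zero). -/
def MeasExt (E : Set (Euc N)) : Set (Euc N) :=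
  {x | Tendsto (fun r : ℝ => volume (E ∩ ball x r) / volume (ball x r))
    (𝓝[>] (0:ℝ)) (𝓝 0)}

/-- The essential boundary `∂^e E = ℝ^N \ (E^0 ∪ E^1)` of `E` (which coincides
`H^{N-1}`-a.e. with the reduced boundary `∂^* E` for sets of finite
perimeter). -/
def essBdry (E : Set (Euc N)) : Set (Euc N) := univ \ (MeasInt E ∪ MeasExt E)

end

noncomputable section
open MeasureTheory Metric Filter Set Function
open scoped Topology ENNReal InnerProductSpace NNReal


section AuxLemmasForDivergenceOfBfield

lemma sigmaFinite_aux {N : ℕ} (Ω : Set (Euc N)) (hΩ : IsOpen Ω) (σ : Measure (Euc N))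
    (locFin : ∀ K : Set (Euc N), K ⊆ Ω → IsCompact K → σ K < ⊤) (h0 : σ Ωᶜ = 0) :
    SigmaFinite σ := by
  obtain ⟨F, hFclosed, hFsub, hFU, hFmono⟩ := hΩ.exists_iUnion_isClosed
  set K : ℕ → Set (Euc N) := fun n => F n ∩ Metric.closedBall 0 n with hK
  have hKcomp : ∀ n, IsCompact (K n) := fun n =>
    (isCompact_closedBall (0 : Euc N) n).inter_left (hFclosed n)
  have hKsub : ∀ n, K n ⊆ Ω := fun n => Set.inter_subset_left.trans (hFsub n)
  refine ⟨⟨⟨fun n => K n ∪ Ωᶜ, fun _ => trivial, ?_, ?_⟩⟩⟩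
  · intro n
    calc σ (K n ∪ Ωᶜ) ≤ σ (K n) + σ Ωᶜ := measure_union_le _ _
    _ < ⊤ := by rw [h0, add_zero]; exact locFin _ (hKsub n) (hKcomp n)
  · apply Set.eq_univ_of_forall; intro x
    by_cases hx : x ∈ Ω
    · have : x ∈ ⋃ n, F n := hFU.symm ▸ hx
      obtain ⟨n, hn⟩ := Set.mem_iUnion.1 this
      obtain ⟨m, hm⟩ := exists_nat_ge ‖x‖
      refine Set.mem_iUnion.2 ⟨max n m, Or.inl ⟨hFmono (le_max_left n m) hn, ?_⟩⟩
      simp only [Metric.mem_closedBall, dist_zero_right]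
      exact hm.trans (by exact_mod_cast Nat.cast_le.2 (le_max_right n m))
    · exact Set.mem_iUnion.2 ⟨0, Or.inr hx⟩

lemma continuous_gradient_aux {N : ℕ} {φ : Euc N → ℝ} (hφ : ContDiff ℝ (⊤ : ℕ∞) φ) :
    Continuous (gradient φ) :=
  (InnerProductSpace.toDual ℝ (Euc N)).symm.continuous.comp
    (hφ.continuous_fderiv (by simp))

lemma gradient_support_aux {N : ℕ} {φ : Euc N → ℝ} :
    Function.support (gradient φ) ⊆ tsupport φ := by
  intro x hx
  have h1 : fderiv ℝ φ x ≠ 0 := by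
    intro h; apply hx; simp [gradient, h]
  exact support_fderiv_subset ℝ (by simpa [Function.mem_support] using h1)

end AuxLemmasForDivergenceOfBfield

/-- Lemma `l:B`: under assumptions (i)–(iv) on `b` (with `b`
locally bounded and extended by `0` outside `Ω`), for every `t` the field
`B(·,t) = ∫_0^t b(·,s) ds` belongs to `𝒟ℳ^∞_loc(Ω)`, with
`Div_x B(·,t) = F(·,t) σ` where `F(x,t) = ∫_0^t f(x,s) ds`, and
`|F(x,t) - F(x,s)| ≤ |t-s|` for `σ`-a.e. `x`. -/
theorem divergence_of_Bfield {N : ℕ}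
    (Ω : Set (Euc N)) (b : Euc N → ℝ → Euc N)
    (σ : Measure (Euc N)) (f : Euc N → ℝ → ℝ)
    (H : DivAssumptions Ω b σ f)
    (hlb : ∀ K : Set (Euc N × ℝ), IsCompact K → ∃ C, ∀ p ∈ K, ‖b p.1 p.2‖ ≤ C)
    (hb0 : ∀ x ∉ Ω, ∀ t : ℝ, b x t = 0) :
    (∀ t : ℝ, ∀ φ : Euc N → ℝ, TestFun Ω φ →
        (∫ x in Ω, ⟪Bfield b x t, gradient φ x⟫_ℝ) = -∫ x, φ x * Ffun f x t ∂σ) ∧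
      ∀ t s : ℝ, ∀ᵐ x ∂σ, |Ffun f x t - Ffun f x s| ≤ |t - s| := by
  obtain ⟨hΩ, hbmeas, hbcont, hfmeas, hfbd, hlocfin, hsuppσ, hdiv⟩ := H
  haveI : SigmaFinite σ := sigmaFinite_aux Ω hΩ σ hlocfin hsuppσ
  constructor
  · intro t φ hφ
    obtain ⟨hφs, hφc, hφΩ⟩ := hφ
    set g := gradient φ with hg
    have hgc : Continuous g := continuous_gradient_aux hφs
    have hgcs : HasCompactSupport g := HasCompactSupport.mono' hφc gradient_support_aux
    have hg0 : ∀ x ∉ tsupport φ, g x = 0 := by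
      intro x hx
      by_contra h
      exact hx (gradient_support_aux (Function.mem_support.2 h))
    obtain ⟨Cφ, hCφ⟩ := hφs.continuous.bounded_above_of_compact_support hφc
    obtain ⟨C0, hC0⟩ := hlb (tsupport φ ×ˢ Set.uIcc 0 t) (hφc.prod isCompact_uIcc)
    set C := max C0 0 with hCdef
    have hCnn : 0 ≤ C := le_max_right _ _
    have hC : ∀ x ∈ tsupport φ, ∀ s ∈ Set.uIcc 0 t, ‖b x s‖ ≤ C := fun x hx s hs =>
      (hC0 (x, s) ⟨hx, hs⟩).trans (le_max_left _ _)
    set σK := σ.restrict (tsupport φ) with hσK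
    haveI : IsFiniteMeasure σK := ⟨by
      rw [hσK, Measure.restrict_apply_univ]; exact hlocfin _ hφΩ hφc⟩
    -- the key computation for a single Ioc piece
    have core : ∀ a a' : ℝ, Set.Ioc a a' ⊆ Set.uIcc 0 t →
        Integrable (fun x => ∫ s in Set.Ioc a a', ⟪b x s, g x⟫_ℝ) (volume.restrict Ω) ∧
        Integrable (fun x => φ x * ∫ s in Set.Ioc a a', f x s) σK ∧
        (∫ x in Ω, ∫ s in Set.Ioc a a', ⟪b x s, g x⟫_ℝ)
          = -∫ x, (φ x * ∫ s in Set.Ioc a a', f x s) ∂σK := by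
      intro a a' hab
      set ν := volume.restrict (Set.Ioc a a') with hν
      haveI : IsFiniteMeasure ν := ⟨by
        rw [hν, Measure.restrict_apply_univ, Real.volume_Ioc]; exact ENNReal.ofReal_lt_top⟩
      -- integrability of the inner-product integrand on the product
      have hmeasF : Measurable fun p : Euc N × ℝ => ⟪b p.1 p.2, g p.1⟫_ℝ :=
        Measurable.inner hbmeas (hgc.measurable.comp measurable_fst)
      have hdom : Integrable (fun p : Euc N × ℝ => C * ‖g p.1‖) ((volume.restrict Ω).prod ν) := by
        have h1 : Integrable (fun x => C * ‖g x‖) volume := by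
          apply Continuous.integrable_of_hasCompactSupport (continuous_const.mul hgc.norm)
          exact HasCompactSupport.mul_left hgcs.norm
        have h2 : Integrable (fun x => C * ‖g x‖) ((ν Set.univ) • (volume.restrict Ω)) :=
          (h1.restrict).smul_measure (measure_ne_top ν _)
        have hmap : Measure.map Prod.fst ((volume.restrict Ω).prod ν)
            = (ν Set.univ) • (volume.restrict Ω) := Measure.map_fst_prod
        rw [← hmap] at h2
        have := (integrable_map_measure h2.aestronglyMeasurable measurable_fst.aemeasurable).1 h2
        exact this
      have hmem : ∀ᵐ p ∂((volume.restrict Ω).prod ν), p ∈ Ω ×ˢ Set.Ioc a a' := by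
        rw [hν, Measure.prod_restrict]
        exact ae_restrict_mem (hΩ.measurableSet.prod measurableSet_Ioc)
      have hae : ∀ᵐ p ∂((volume.restrict Ω).prod ν),
          ‖⟪b p.1 p.2, g p.1⟫_ℝ‖ ≤ C * ‖g p.1‖ := by
        filter_upwards [hmem] with p hp
        by_cases hx : p.1 ∈ tsupport φ
        · calc ‖⟪b p.1 p.2, g p.1⟫_ℝ‖ ≤ ‖b p.1 p.2‖ * ‖g p.1‖ := norm_inner_le_norm _ _
          _ ≤ C * ‖g p.1‖ :=
            mul_le_mul_of_nonneg_right (hC _ hx _ (hab hp.2)) (norm_nonneg _)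
        · rw [hg0 _ hx]; simp [hCnn]
      have Hprod : Integrable (fun p : Euc N × ℝ => ⟪b p.1 p.2, g p.1⟫_ℝ)
          ((volume.restrict Ω).prod ν) :=
        Integrable.mono' hdom hmeasF.aestronglyMeasurable hae
      have I1 : Integrable (fun x => ∫ s in Set.Ioc a a', ⟪b x s, g x⟫_ℝ) (volume.restrict Ω) :=
        Hprod.integral_prod_left
      -- integrability of φ x * f x s on ν.prod σK
      have hmeasG : Measurable fun p : ℝ × Euc N => φ p.2 * f p.2 p.1 :=
        (hφs.continuous.measurable.comp measurable_snd).mul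
          (hfmeas.comp (measurable_snd.prodMk measurable_fst))
      have hfb2 : ∀ᵐ p ∂(ν.prod σK), |f p.2 p.1| ≤ 1 := by
        have hms : MeasurableSet {p : ℝ × Euc N | |f p.2 p.1| ≤ 1} :=
          measurableSet_le (hfmeas.comp (measurable_snd.prodMk measurable_fst)).abs
            measurable_const
        rw [Measure.ae_prod_iff_ae_ae hms]
        exact Filter.Eventually.of_forall fun s => ae_restrict_of_ae (hfbd s)
      have haeG : ∀ᵐ p ∂(ν.prod σK), ‖φ p.2 * f p.2 p.1‖ ≤ Cφ := by
        filter_upwards [hfb2] with p hp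
        rw [norm_mul, Real.norm_eq_abs (f p.2 p.1)]
        have h3 : ‖φ p.2‖ * |f p.2 p.1| ≤ Cφ * 1 :=
          mul_le_mul (hCφ p.2) hp (abs_nonneg _) ((norm_nonneg (φ p.2)).trans (hCφ p.2))
        simpa using h3
      have H2 : Integrable (fun p : ℝ × Euc N => φ p.2 * f p.2 p.1) (ν.prod σK) :=
        Integrable.mono' (integrable_const Cφ) hmeasG.aestronglyMeasurable haeG
      have I2 : Integrable (fun x => φ x * ∫ s in Set.Ioc a a', f x s) σK := by
        have := (H2.swap).integral_prod_left
        refine this.congr (Filter.Eventually.of_forall fun x => ?_)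
        exact integral_const_mul (φ x) _
      refine ⟨I1, I2, ?_⟩
      calc (∫ x in Ω, ∫ s in Set.Ioc a a', ⟪b x s, g x⟫_ℝ)
          = ∫ s in Set.Ioc a a', ∫ x in Ω, ⟪b x s, g x⟫_ℝ :=
            integral_integral_swap (f := fun x s => ⟪b x s, g x⟫_ℝ) Hprod
      _ = ∫ s in Set.Ioc a a', -∫ x, φ x * f x s ∂σ := by
            apply integral_congr_ae
            exact Filter.Eventually.of_forall fun s => hdiv s φ ⟨hφs, hφc, hφΩ⟩
      _ = -∫ s in Set.Ioc a a', ∫ x, φ x * f x s ∂σ := integral_neg _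
      _ = -∫ s in Set.Ioc a a', ∫ x, φ x * f x s ∂σK := by
            congr 1
            apply integral_congr_ae
            refine Filter.Eventually.of_forall fun s => ?_
            rw [hσK]
            exact (setIntegral_eq_integral_of_forall_compl_eq_zero fun x hx => by
              rw [image_eq_zero_of_notMem_tsupport hx, zero_mul]).symm
      _ = -∫ x, (∫ s in Set.Ioc a a', φ x * f x s) ∂σK := by
            congr 1
            exact integral_integral_swap (f := fun s x => φ x * f x s) H2
      _ = -∫ x, (φ x * ∫ s in Set.Ioc a a', f x s) ∂σK := by
            congr 1
            apply integral_congr_ae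
            exact Filter.Eventually.of_forall fun x => integral_const_mul (φ x) _
    -- assemble
    have hsub1 : Set.Ioc (0:ℝ) t ⊆ Set.uIcc 0 t := (Set.Ioc_subset_Icc_self.trans Set.Icc_subset_uIcc)
    have hsub2 : Set.Ioc t (0:ℝ) ⊆ Set.uIcc 0 t := Set.uIcc_comm (0:ℝ) t ▸ (Set.Ioc_subset_Icc_self.trans Set.Icc_subset_uIcc)
    obtain ⟨I1a, I2a, Ea⟩ := core 0 t hsub1
    obtain ⟨I1b, I2b, Eb⟩ := core t 0 hsub2
    have hpt : ∀ᵐ x ∂(volume.restrict Ω), ⟪Bfield b x t, g x⟫_ℝ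
        = (∫ s in Set.Ioc (0:ℝ) t, ⟪b x s, g x⟫_ℝ) - ∫ s in Set.Ioc t (0:ℝ), ⟪b x s, g x⟫_ℝ := by
      filter_upwards [ae_restrict_of_ae hbcont, ae_restrict_mem hΩ.measurableSet] with x hcx hxΩ
      have hcont : Continuous fun s => b x s := hcx hxΩ
      have hii : IntervalIntegrable (fun s => b x s) volume 0 t := hcont.intervalIntegrable _ _
      have h1 : ⟪Bfield b x t, g x⟫_ℝ = ∫ s in (0:ℝ)..t, ⟪b x s, g x⟫_ℝ := by
        rw [real_inner_comm]
        have h2 : ⟪g x, Bfield b x t⟫_ℝ = ∫ s in (0:ℝ)..t, ⟪g x, b x s⟫_ℝ := by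
          simpa only [innerSL_apply_apply, Bfield] using ((innerSL ℝ (g x)).intervalIntegral_comp_comm hii).symm
        rw [h2]
        simp_rw [real_inner_comm]
      rw [h1]
      rfl
    calc (∫ x in Ω, ⟪Bfield b x t, g x⟫_ℝ)
        = ∫ x in Ω, ((∫ s in Set.Ioc (0:ℝ) t, ⟪b x s, g x⟫_ℝ)
            - ∫ s in Set.Ioc t (0:ℝ), ⟪b x s, g x⟫_ℝ) := integral_congr_ae hpt
    _ = (∫ x in Ω, ∫ s in Set.Ioc (0:ℝ) t, ⟪b x s, g x⟫_ℝ)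
        - ∫ x in Ω, ∫ s in Set.Ioc t (0:ℝ), ⟪b x s, g x⟫_ℝ := integral_sub I1a I1b
    _ = -((∫ x, (φ x * ∫ s in Set.Ioc (0:ℝ) t, f x s) ∂σK)
        - ∫ x, (φ x * ∫ s in Set.Ioc t (0:ℝ), f x s) ∂σK) := by rw [Ea, Eb]; ring
    _ = -∫ x, ((φ x * ∫ s in Set.Ioc (0:ℝ) t, f x s)
        - φ x * ∫ s in Set.Ioc t (0:ℝ), f x s) ∂σK := by rw [integral_sub I2a I2b]
    _ = -∫ x, φ x * Ffun f x t ∂σK := by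
          congr 1
          apply integral_congr_ae
          refine Filter.Eventually.of_forall fun x => ?_
          show (φ x * ∫ s in Set.Ioc (0:ℝ) t, f x s) - φ x * ∫ s in Set.Ioc t (0:ℝ), f x s
              = φ x * Ffun f x t
          rw [← mul_sub]
          rfl
    _ = -∫ x, φ x * Ffun f x t ∂σ := by
          congr 1
          rw [hσK]
          exact setIntegral_eq_integral_of_forall_compl_eq_zero fun x hx => by
            rw [image_eq_zero_of_notMem_tsupport hx, zero_mul]
  · intro t s
    have hmeasset : MeasurableSet {p : Euc N × ℝ | |f p.1 p.2| ≤ 1} := by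
      have : Measurable fun p : Euc N × ℝ => |f p.1 p.2| := hfmeas.abs
      exact measurableSet_le this measurable_const
    have key : ∀ n : ℕ, ∀ᵐ x ∂σ, ∀ᵐ r ∂(volume.restrict (Set.Ioc (-(n:ℝ)) n)), |f x r| ≤ 1 := by
      intro n
      exact (Measure.ae_ae_comm (μ := σ) (ν := volume.restrict (Set.Ioc (-(n:ℝ)) n)) hmeasset).2
        (Filter.Eventually.of_forall fun r => hfbd r)
    have key' : ∀ᵐ x ∂σ, ∀ n : ℕ, ∀ᵐ r ∂(volume.restrict (Set.Ioc (-(n:ℝ)) n)), |f x r| ≤ 1 :=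
      (MeasureTheory.ae_all_iff).2 key
    filter_upwards [key'] with x hx
    obtain ⟨n, hn⟩ := exists_nat_ge (max |t| |s|)
    have hts : ∀ a : ℝ, |a| ≤ n → -(n:ℝ) ≤ a ∧ a ≤ n := fun a ha => abs_le.1 ha
    have ht' : |t| ≤ n := (le_max_left _ _).trans hn
    have hs' : |s| ≤ n := (le_max_right _ _).trans hn
    have hfx : Measurable (f x) := hfmeas.of_uncurry_left
    have hsub : ∀ a b : ℝ, |a| ≤ n → |b| ≤ n → Set.Ioc a b ⊆ Set.Ioc (-(n:ℝ)) n := by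
      intro a b ha hb
      exact Set.Ioc_subset_Ioc (hts a ha).1 (hts b hb).2
    have hint : ∀ a b : ℝ, |a| ≤ n → |b| ≤ n → IntegrableOn (f x) (Set.Ioc a b) volume := by
      intro a b ha hb
      have hbd : ∀ᵐ r ∂(volume.restrict (Set.Ioc a b)), ‖f x r‖ ≤ 1 := by
        have := ae_restrict_of_ae_restrict_of_subset (hsub a b ha hb) (hx n)
        exact this.mono fun r hr => by simpa [Real.norm_eq_abs] using hr
      exact Integrable.mono' (integrable_const 1) hfx.aestronglyMeasurable hbd
    have hii : ∀ a b : ℝ, |a| ≤ n → |b| ≤ n → IntervalIntegrable (f x) volume a b := by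
      intro a b ha hb
      exact ⟨hint a b ha hb, hint b a hb ha⟩
    have h0 : |(0:ℝ)| ≤ n := by simp
    have h1 : Ffun f x t - Ffun f x s = ∫ r in s..t, f x r := by
      rw [Ffun, Ffun]
      exact intervalIntegral.integral_interval_sub_left (hii 0 t h0 ht') (hii 0 s h0 hs')
    rw [h1]
    have hbd2 : ∀ᵐ r ∂(volume.restrict (Set.uIoc s t)), ‖f x r‖ ≤ (1:ℝ) := by
      have hsub2 : Set.uIoc s t ⊆ Set.Ioc (-(n:ℝ)) n := by
        rw [Set.uIoc]
        refine Set.Ioc_subset_Ioc ?_ ?_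
        · exact le_min (hts s hs').1 (hts t ht').1
        · exact max_le (hts s hs').2 (hts t ht').2
      have := ae_restrict_of_ae_restrict_of_subset hsub2 (hx n)
      exact this.mono fun r hr => by simpa [Real.norm_eq_abs] using hr
    calc |∫ r in s..t, f x r| = ‖∫ r in s..t, f x r‖ := (Real.norm_eq_abs _).symm
    _ ≤ |∫ r in s..t, (1:ℝ)| := intervalIntegral.norm_integral_le_abs_of_norm_le hbd2 intervalIntegrable_const
    _ = |t - s| := by simp
end
end

section
/- (Intermediate claim in the proof of the Sobolev chain rule) Under assumptions (i)–(iv) on b, with B(x,t) = ∫_0^t b(x,s) ds on ℝ^N, F(x,t) = ∫_0^t f(x,s) ds the σ-density of Div_x B(·,t), and B_ε(·,t) := ρ_ε * B(·,t), let u ∈ W^{1,1}_loc(ℝ^N) ∩ L^∞_loc(ℝ^N) and φ ∈ C_c^∞(ℝ^N). Then ∫_{ℝ^N} φ(x) Div_x B_ε(x,u(x)) dx → ∫_{ℝ^N} φ(x) F(x, ũ(x)) dσ(x) as ε → 0⁺, where ũ is the precise representative of u. -/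
open MeasureTheory Metric Filter Set Function
open scoped Topology ENNReal InnerProductSpace NNReal

noncomputable section
open MeasureTheory Metric Filter Set Function
open scoped Topology ENNReal InnerProductSpace NNReal
namespace MollAux
variable {N : ℕ}

lemma K_zero_of {ρ : Euc N → ℝ} (hρ : IsMollifier ρ) {ε : ℝ} (hε : 0 < ε)
    {x : Euc N} (hx : ¬ ‖x‖ ≤ ε) : mollK ρ ε x = 0 := by
  have hx' : (1:ℝ) < ‖ε⁻¹ • x‖ := by
    rw [norm_smul, norm_inv, Real.norm_eq_abs, abs_of_pos hε]
    rw [lt_inv_mul_iff₀ hε, mul_one]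
    exact lt_of_not_ge hx
  have hns : ε⁻¹ • x ∉ tsupport ρ := fun h => by
    have := hρ.supp h
    rw [mem_closedBall, dist_zero_right] at this
    exact absurd this (not_le.2 hx')
  simp [mollK, image_eq_zero_of_notMem_tsupport hns]

lemma hcsK {ρ : Euc N → ℝ} (hρ : IsMollifier ρ) {ε : ℝ} (hε : 0 < ε) :
    HasCompactSupport (mollK ρ ε) := by
  apply HasCompactSupport.intro (isCompact_closedBall (0 : Euc N) ε)
  intro x hx
  rw [mem_closedBall, dist_zero_right] at hx
  exact K_zero_of hρ hε hx

lemma contK {ρ : Euc N → ℝ} (hρ : IsMollifier ρ) (ε : ℝ) :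
    Continuous (mollK ρ ε) :=
  continuous_const.mul (hρ.smooth.continuous.comp (continuous_const_smul _))

lemma intK {ρ : Euc N → ℝ} (hρ : IsMollifier ρ) {ε : ℝ} (hε : 0 < ε) :
    Integrable (mollK ρ ε) := (contK hρ ε).integrable_of_hasCompactSupport (hcsK hρ hε)

lemma K_nonneg {ρ : Euc N → ℝ} (hρ : IsMollifier ρ) {ε : ℝ} (hε : 0 < ε) (x : Euc N) :
    0 ≤ mollK ρ ε x :=
  mul_nonneg (inv_nonneg.2 (pow_nonneg hε.le _)) (hρ.nonneg _)

lemma K_le {ρ : Euc N → ℝ} (hρ : IsMollifier ρ) {ε : ℝ} (hε : 0 < ε) {C : ℝ}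
    (hC : ∀ z, ρ z ≤ C) (x : Euc N) : mollK ρ ε x ≤ (ε ^ N)⁻¹ * C :=
  mul_le_mul_of_nonneg_left (hC _) (inv_nonneg.2 (pow_nonneg hε.le _))

lemma integralK {ρ : Euc N → ℝ} (hρ : IsMollifier ρ) {ε : ℝ} (hε : 0 < ε) :
    ∫ x : Euc N, mollK ρ ε x = 1 := by
  unfold mollK
  rw [integral_const_mul, Measure.integral_comp_smul volume ρ ε⁻¹]
  rw [finrank_euclideanSpace_fin, hρ.integral_one]
  have h1 : (0:ℝ) < ε⁻¹ ^ N := pow_pos (inv_pos.2 hε) N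
  rw [smul_eq_mul, mul_one, abs_of_pos (inv_pos.2 h1), ← inv_pow]
  exact mul_inv_cancel₀ h1.ne'

lemma integralK_shift {ρ : Euc N → ℝ} (hρ : IsMollifier ρ) {ε : ℝ} (hε : 0 < ε) (y : Euc N) :
    ∫ x : Euc N, mollK ρ ε (x - y) = 1 := by
  rw [integral_sub_right_eq_self (mollK ρ ε) y]; exact integralK hρ hε

lemma meas_Ffun {f : Euc N → ℝ → ℝ} (hf : Measurable (Function.uncurry f)) :
    Measurable (Function.uncurry (Ffun f)) := by
  have key : ∀ (p : Euc N × ℝ), Function.uncurry (Ffun f) p =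
      (∫ s, Set.indicator (Set.Ioc 0 p.2) (f p.1) s) -
        ∫ s, Set.indicator (Set.Ioc p.2 0) (f p.1) s := by
    intro p
    rw [Function.uncurry, Ffun, intervalIntegral,
      integral_indicator measurableSet_Ioc, integral_indicator measurableSet_Ioc]
  have hsub : ∀ g h : (Euc N × ℝ) → ℝ, Measurable g → Measurable h →
      Measurable (fun p : Euc N × ℝ => ∫ s, Set.indicator (Set.Ioc (g p) (h p)) (f p.1) s) := by
    intro g h hg hh
    have hjm : Measurable (Function.uncurry fun (p : Euc N × ℝ) (s : ℝ) =>
        Set.indicator (Set.Ioc (g p) (h p)) (f p.1) s) := by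
      have he : (Function.uncurry fun (p : Euc N × ℝ) (s : ℝ) =>
          Set.indicator (Set.Ioc (g p) (h p)) (f p.1) s) =
          fun q : (Euc N × ℝ) × ℝ =>
            if q.2 ∈ Set.Ioc (g q.1) (h q.1) then f q.1.1 q.2 else 0 := by
        funext q; simp [Function.uncurry, Set.indicator_apply]
      rw [he]
      apply Measurable.ite
      · have : {q : (Euc N × ℝ) × ℝ | q.2 ∈ Set.Ioc (g q.1) (h q.1)} =
            {q : (Euc N × ℝ) × ℝ | g q.1 < q.2} ∩ {q | q.2 ≤ h q.1} := by
          ext q; simp [Set.mem_Ioc]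
        rw [this]
        exact (measurableSet_lt (hg.comp measurable_fst) measurable_snd).inter
          (measurableSet_le measurable_snd (hh.comp measurable_fst))
      · exact hf.comp ((measurable_fst.fst).prodMk measurable_snd)
      · exact measurable_const
    exact (StronglyMeasurable.integral_prod_right hjm.stronglyMeasurable).measurable
  have heq : Function.uncurry (Ffun f) = fun p : Euc N × ℝ =>
      (∫ s, Set.indicator (Set.Ioc 0 p.2) (f p.1) s) -
        ∫ s, Set.indicator (Set.Ioc p.2 0) (f p.1) s := funext key
  rw [heq]
  exact (hsub (fun _ => 0) (fun p => p.2) measurable_const measurable_snd).sub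
    (hsub (fun p => p.2) (fun _ => 0) measurable_snd measurable_const)

lemma Ffun_intervalIntegrable {f : Euc N → ℝ → ℝ} (hf : Measurable (Function.uncurry f))
    {y : Euc N} (hy : ∀ᵐ s : ℝ, |f y s| ≤ 1) (a b : ℝ) :
    IntervalIntegrable (f y) volume a b := by
  have hfy : Measurable (f y) := hf.comp measurable_prodMk_left
  rw [intervalIntegrable_iff]
  haveI : IsFiniteMeasure (volume.restrict (Set.uIoc a b)) :=
    ⟨by rw [Measure.restrict_apply_univ, Set.uIoc]; exact measure_Ioc_lt_top⟩
  apply Integrable.mono' (integrable_const (1:ℝ))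
  · exact hfy.aestronglyMeasurable
  · exact ae_restrict_of_ae (hy.mono fun s h => by simpa [Real.norm_eq_abs] using h)

lemma Ffun_lip {f : Euc N → ℝ → ℝ} (hf : Measurable (Function.uncurry f))
    {y : Euc N} (hy : ∀ᵐ s : ℝ, |f y s| ≤ 1) (t t' : ℝ) :
    |Ffun f y t - Ffun f y t'| ≤ |t - t'| := by
  have hd : Ffun f y t - Ffun f y t' = ∫ s in t'..t, f y s :=
    intervalIntegral.integral_interval_sub_left
      (Ffun_intervalIntegrable hf hy 0 t) (Ffun_intervalIntegrable hf hy 0 t')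
  rw [hd]
  have := intervalIntegral.norm_integral_le_of_norm_le_const_ae (C := 1) (f := f y)
    (a := t') (b := t) (hy.mono fun s h _ => by simpa [Real.norm_eq_abs] using h)
  calc ‖∫ s in t'..t, f y s‖ ≤ 1 * |t - t'| := this
  _ = |t - t'| := one_mul _

lemma Ffun_abs_le {f : Euc N → ℝ → ℝ} (hf : Measurable (Function.uncurry f))
    {y : Euc N} (hy : ∀ᵐ s : ℝ, |f y s| ≤ 1) (t : ℝ) :
    |Ffun f y t| ≤ |t| := by
  have := Ffun_lip hf hy t 0
  simpa [Ffun, intervalIntegral.integral_same] using this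

lemma vol_ball (y : Euc N) {r : ℝ} (hr : 0 < r) :
    (volume (ball y r)).toReal = r ^ N * (volume (ball (0:Euc N) 1)).toReal := by
  rcases Nat.eq_zero_or_pos N with h0 | hN
  · subst h0
    haveI : Subsingleton (Euc 0) := ⟨fun a b => PiLp.ext fun i => i.elim0⟩
    have hb : ∀ (z : Euc 0) (s : ℝ), 0 < s → ball z s = Set.univ := by
      intro z s hs
      apply Set.eq_univ_of_forall
      intro w
      rw [mem_ball, Subsingleton.elim w z, dist_self]
      exact hs
    rw [hb y r hr, hb 0 1 one_pos, pow_zero, one_mul]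
  · haveI : Nontrivial (Euc N) :=
      Module.nontrivial_of_finrank_pos (R := ℝ) (by rw [finrank_euclideanSpace_fin]; exact hN)
    rw [Measure.addHaar_ball volume y hr.le, ENNReal.toReal_mul,
      ENNReal.toReal_ofReal (pow_nonneg hr.le _), finrank_euclideanSpace_fin]

lemma vol_ball_pos (y : Euc N) {r : ℝ} (hr : 0 < r) :
    0 < (volume (ball y r)).toReal :=
  ENNReal.toReal_pos (measure_ball_pos volume y hr).ne' measure_ball_lt_top.ne


lemma tendsto_two_mul : Tendsto (fun ε : ℝ => 2*ε) (𝓝[>](0:ℝ)) (𝓝[>](0:ℝ)) := by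
  rw [tendsto_nhdsWithin_iff]
  constructor
  · have h : Tendsto (fun ε : ℝ => 2*ε) (𝓝 (0:ℝ)) (𝓝 (2*0 : ℝ)) :=
      (continuous_const.mul continuous_id).tendsto (0:ℝ)
    have h2 := h.mono_left (nhdsWithin_le_nhds (s := Set.Ioi (0:ℝ)))
    simpa using h2
  · filter_upwards [self_mem_nhdsWithin] with ε hε
    exact mul_pos two_pos (show (0:ℝ) < ε from hε)

set_option maxHeartbeats 1000000 in
lemma pointwise_conv {ρ : Euc N → ℝ} (hρ : IsMollifier ρ) {Cρ : ℝ} (hCρ : ∀ z, ρ z ≤ Cρ)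
    {u : Euc N → ℝ} (hu : LocallyIntegrable u volume)
    {f : Euc N → ℝ → ℝ} (hf : Measurable (Function.uncurry f))
    {φ : Euc N → ℝ} (hφc : Continuous φ) {Cφ : ℝ} (hCφ : ∀ x, |φ x| ≤ Cφ)
    {y : Euc N} {z : ℝ} (hy1 : ApproxLimitAt u y z)
    (hy2 : ∀ᵐ s : ℝ, |f y s| ≤ 1)
    {C₀ : ℝ} (hbd : ∀ᵐ x, |φ x * Ffun f y (u x)| ≤ C₀) :
    Tendsto (fun ε => ∫ x, φ x * (mollK ρ ε (x - y) * Ffun f y (u x)))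
      (𝓝[>] (0:ℝ)) (𝓝 (φ y * Ffun f y z)) := by
  have hCρ0 : 0 ≤ Cρ := le_trans (hρ.nonneg 0) (hCρ 0)
  have hCφ0 : 0 ≤ Cφ := le_trans (abs_nonneg _) (hCφ 0)
  set c₂ : ℝ := |Ffun f y z| with hc₂
  set L : ℝ := φ y * Ffun f y z with hL
  set A' : ℝ → ℝ := fun ε => ∫ x, mollK ρ ε (x - y) * |u x - z| with hA'def
  set B' : ℝ → ℝ := fun ε => ∫ x, mollK ρ ε (x - y) * |φ x - φ y| with hB'def
  set v1 : ℝ := (volume (ball (0:Euc N) 1)).toReal with hv1def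
  have hv1 : 0 < v1 := vol_ball_pos (0:Euc N) one_pos
  -- u Ffun composition measurability
  have hFu : AEStronglyMeasurable (fun x => Ffun f y (u x)) volume := by
    have hFym : Measurable (fun t => Ffun f y t) :=
      (meas_Ffun hf).of_uncurry_left
    exact (hFym.comp_aemeasurable hu.aestronglyMeasurable.aemeasurable).aestronglyMeasurable
  -- convergence of A'
  have hAnn : ∀ ε : ℝ, 0 < ε → 0 ≤ A' ε := fun ε hε =>
    integral_nonneg fun x => mul_nonneg (K_nonneg hρ hε _) (abs_nonneg _)
  have hA : Tendsto A' (𝓝[>](0:ℝ)) (𝓝 0) := by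
    set c3 : ℝ := Cρ * 2^N * v1 with hc3
    have hUlim : Tendsto (fun ε : ℝ => c3 * ((volume (ball y (2*ε))).toReal⁻¹ *
        ∫ x in ball y (2*ε), |u x - z|)) (𝓝[>](0:ℝ)) (𝓝 0) := by
      have := (hy1.comp tendsto_two_mul).const_mul c3
      simpa using this
    apply tendsto_of_tendsto_of_tendsto_of_le_of_le' tendsto_const_nhds hUlim
    · filter_upwards [self_mem_nhdsWithin] with ε hε; exact hAnn ε hε
    · filter_upwards [self_mem_nhdsWithin] with ε hε
      have hε' : (0:ℝ) < ε := hε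
      have h2ε : (0:ℝ) < 2*ε := by linarith
      have hcb : IntegrableOn (fun x => |u x - z|) (closedBall y (2*ε)) :=
        ((hu.integrableOn_isCompact (isCompact_closedBall y (2*ε))).sub
          (integrableOn_const measure_closedBall_lt_top.ne)).abs
      have hw : IntegrableOn (fun x => |u x - z|) (closedBall y ε) :=
        hcb.mono_set (closedBall_subset_closedBall (by linarith))
      have hball : IntegrableOn (fun x => |u x - z|) (ball y (2*ε)) :=
        hcb.mono_set ball_subset_closedBall
      have step1 : A' ε ≤ ((ε^N)⁻¹ * Cρ) * ∫ x in closedBall y ε, |u x - z| := by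
        have hind : Integrable
            ((closedBall y ε).indicator (fun x => ((ε^N)⁻¹ * Cρ) * |u x - z|)) :=
          MeasureTheory.IntegrableOn.integrable_indicator
            (Integrable.const_mul hw ((ε^N)⁻¹ * Cρ)) measurableSet_closedBall
        have hle : A' ε ≤ ∫ x, (closedBall y ε).indicator
            (fun x => ((ε^N)⁻¹ * Cρ) * |u x - z|) x := by
          apply integral_mono_of_nonneg
            (ae_of_all _ fun x => mul_nonneg (K_nonneg hρ hε' _) (abs_nonneg _)) hind
          apply ae_of_all
          intro x
          by_cases hx : x ∈ closedBall y ε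
          · rw [Set.indicator_of_mem hx]
            exact mul_le_mul_of_nonneg_right (K_le hρ hε' hCρ _) (abs_nonneg _)
          · rw [Set.indicator_of_notMem hx]
            have hz : mollK ρ ε (x - y) = 0 := by
              apply K_zero_of hρ hε'
              rw [mem_closedBall, dist_eq_norm] at hx
              simpa using hx
            show mollK ρ ε (x - y) * |u x - z| ≤ 0
            rw [hz, zero_mul]
        rwa [integral_indicator measurableSet_closedBall, integral_const_mul] at hle
      have step3 : ∫ x in closedBall y ε, |u x - z| ≤ ∫ x in ball y (2*ε), |u x - z| := by
        apply setIntegral_mono_set hball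
          (ae_of_all _ fun x => abs_nonneg _)
          (HasSubset.Subset.eventuallyLE (closedBall_subset_ball (by linarith)))
      have hvol : (volume (ball y (2*ε))).toReal = (2*ε)^N * v1 := vol_ball y h2ε
      calc A' ε ≤ ((ε^N)⁻¹ * Cρ) * ∫ x in closedBall y ε, |u x - z| := step1
      _ ≤ ((ε^N)⁻¹ * Cρ) * ∫ x in ball y (2*ε), |u x - z| := by
          apply mul_le_mul_of_nonneg_left step3
          positivity
      _ = c3 * ((volume (ball y (2*ε))).toReal⁻¹ * ∫ x in ball y (2*ε), |u x - z|) := by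
          rw [hvol, hc3]
          rw [mul_pow]
          have hεN : (0:ℝ) < ε^N := pow_pos hε' N
          have h2N : (0:ℝ) < (2:ℝ)^N := pow_pos two_pos N
          field_simp
  -- convergence of B'
  have hBnn : ∀ ε : ℝ, 0 < ε → 0 ≤ B' ε := fun ε hε =>
    integral_nonneg fun x => mul_nonneg (K_nonneg hρ hε _) (abs_nonneg _)
  have hB : Tendsto B' (𝓝[>](0:ℝ)) (𝓝 0) := by
    rw [Metric.tendsto_nhds]
    intro η hη
    obtain ⟨δ, hδ, hδ'⟩ := Metric.continuousAt_iff.1 (hφc.continuousAt (x := y)) (η/2) (half_pos hη)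
    filter_upwards [Ioo_mem_nhdsGT_of_mem (Set.mem_Ico.2 ⟨le_refl 0, hδ⟩)] with ε hε
    obtain ⟨hε0, hεδ⟩ := hε
    have hstep : B' ε ≤ η/2 := by
      have hint : Integrable (fun x => mollK ρ ε (x - y) * (η/2)) :=
        ((intK hρ hε0).comp_sub_right y).mul_const _
      have hle : B' ε ≤ ∫ x, mollK ρ ε (x - y) * (η/2) := by
        apply integral_mono_of_nonneg
          (ae_of_all _ fun x => mul_nonneg (K_nonneg hρ hε0 _) (abs_nonneg _)) hint
        apply ae_of_all
        intro x
        show mollK ρ ε (x - y) * |φ x - φ y| ≤ mollK ρ ε (x - y) * (η / 2)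
        by_cases hm : mollK ρ ε (x - y) = 0
        · rw [hm, zero_mul, zero_mul]
        · apply mul_le_mul_of_nonneg_left _ (K_nonneg hρ hε0 _)
          have hxy : ‖x - y‖ ≤ ε := by
            by_contra hc
            exact hm (K_zero_of hρ hε0 hc)
          have : dist x y < δ := by
            rw [dist_eq_norm]; linarith
          have := hδ' this
          rw [Real.dist_eq] at this
          exact this.le
      rw [integral_mul_const, integralK_shift hρ hε0, one_mul] at hle
      exact hle
    rw [Real.dist_eq, sub_zero, abs_of_nonneg (hBnn ε hε0)]
    linarith
  -- main estimate
  have key : ∀ᶠ ε in 𝓝[>](0:ℝ),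
      ‖(∫ x, φ x * (mollK ρ ε (x - y) * Ffun f y (u x))) - L‖ ≤
        Cφ * A' ε + B' ε * c₂ := by
    filter_upwards [self_mem_nhdsWithin] with ε hε
    have hε' : (0:ℝ) < ε := hε
    have hIntmoll : Integrable (fun x => mollK ρ ε (x - y)) :=
      (intK hρ hε').comp_sub_right y
    have hInt1 : Integrable (fun x => φ x * (mollK ρ ε (x - y) * Ffun f y (u x))) := by
      have he : (fun x => φ x * (mollK ρ ε (x - y) * Ffun f y (u x))) =
          fun x => (φ x * Ffun f y (u x)) * mollK ρ ε (x - y) := funext fun x => by ring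
      rw [he]
      exact hIntmoll.bdd_mul (hφc.aestronglyMeasurable.mul hFu)
        (hbd.mono fun x h => by rwa [Real.norm_eq_abs])
    have hIntL : Integrable (fun x => mollK ρ ε (x - y) * L) := hIntmoll.mul_const _
    have hLint : ∫ x, mollK ρ ε (x - y) * L = L := by
      rw [integral_mul_const, integralK_shift hρ hε', one_mul]
    have hsubeq : (∫ x, φ x * (mollK ρ ε (x - y) * Ffun f y (u x))) - L =
        ∫ x, (φ x * (mollK ρ ε (x - y) * Ffun f y (u x)) - mollK ρ ε (x - y) * L) := by
      rw [integral_sub hInt1 hIntL, hLint]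
    -- integrable dominating function
    have hcbw : IntegrableOn (fun x => |u x - z|) (closedBall y ε) :=
      ((hu.integrableOn_isCompact (isCompact_closedBall y ε)).sub
        (integrableOn_const measure_closedBall_lt_top.ne)).abs
    have hg1 : Integrable (fun x => mollK ρ ε (x - y) * |u x - z|) := by
      have he : (fun x => mollK ρ ε (x - y) * |u x - z|) =
          fun x => mollK ρ ε (x - y) *
            (closedBall y ε).indicator (fun x => |u x - z|) x := by
        funext x
        by_cases hx : x ∈ closedBall y ε
        · rw [Set.indicator_of_mem hx]
        · rw [Set.indicator_of_notMem hx]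
          have : mollK ρ ε (x - y) = 0 := by
            apply K_zero_of hρ hε'
            rw [mem_closedBall, dist_eq_norm] at hx
            simpa using hx
          rw [this, zero_mul, zero_mul]
      rw [he]
      exact (hcbw.integrable_indicator measurableSet_closedBall).bdd_mul
        (((contK hρ ε).comp (continuous_id.sub continuous_const)).aestronglyMeasurable)
        (ae_of_all _ fun x => by
          rw [Real.norm_eq_abs, abs_of_nonneg (K_nonneg hρ hε' _)]
          exact K_le hρ hε' hCρ _)
    have hg2 : Integrable (fun x => mollK ρ ε (x - y) * |φ x - φ y|) := by
      have he : (fun x => mollK ρ ε (x - y) * |φ x - φ y|) =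
          fun x => |φ x - φ y| * mollK ρ ε (x - y) := funext fun x => by ring
      rw [he]
      exact hIntmoll.bdd_mul
        ((hφc.sub continuous_const).abs.aestronglyMeasurable)
        (ae_of_all _ fun x => by
          rw [Real.norm_eq_abs, abs_abs]
          calc |φ x - φ y| ≤ |φ x| + |φ y| := abs_sub _ _
          _ ≤ Cφ + Cφ := add_le_add (hCφ x) (hCφ y))
    have hgint : Integrable (fun x =>
        Cφ * (mollK ρ ε (x - y) * |u x - z|) + (mollK ρ ε (x - y) * |φ x - φ y|) * c₂) :=
      (hg1.const_mul Cφ).add (hg2.mul_const c₂)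
    have hptw : ∀ x, ‖φ x * (mollK ρ ε (x - y) * Ffun f y (u x)) - mollK ρ ε (x - y) * L‖ ≤
        Cφ * (mollK ρ ε (x - y) * |u x - z|) + (mollK ρ ε (x - y) * |φ x - φ y|) * c₂ := by
      intro x
      have hm : 0 ≤ mollK ρ ε (x - y) := K_nonneg hρ hε' _
      have hinner : |φ x * Ffun f y (u x) - φ y * Ffun f y z| ≤
          Cφ * |u x - z| + |φ x - φ y| * c₂ := by
        have hdecomp : φ x * Ffun f y (u x) - φ y * Ffun f y z =
            φ x * (Ffun f y (u x) - Ffun f y z) + (φ x - φ y) * Ffun f y z := by ring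
        rw [hdecomp]
        calc |φ x * (Ffun f y (u x) - Ffun f y z) + (φ x - φ y) * Ffun f y z| ≤
            |φ x * (Ffun f y (u x) - Ffun f y z)| + |(φ x - φ y) * Ffun f y z| :=
              abs_add_le _ _
        _ = |φ x| * |Ffun f y (u x) - Ffun f y z| + |φ x - φ y| * c₂ := by
              rw [abs_mul, abs_mul, hc₂]
        _ ≤ Cφ * |u x - z| + |φ x - φ y| * c₂ := by
              apply add_le_add _ le_rfl
              exact mul_le_mul (hCφ x) (Ffun_lip hf hy2 (u x) z) (abs_nonneg _) hCφ0
      calc ‖φ x * (mollK ρ ε (x - y) * Ffun f y (u x)) - mollK ρ ε (x - y) * L‖ =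
          mollK ρ ε (x - y) * |φ x * Ffun f y (u x) - φ y * Ffun f y z| := by
            rw [Real.norm_eq_abs, hL]
            rw [show φ x * (mollK ρ ε (x - y) * Ffun f y (u x)) -
                mollK ρ ε (x - y) * (φ y * Ffun f y z) =
                mollK ρ ε (x - y) * (φ x * Ffun f y (u x) - φ y * Ffun f y z) from by ring]
            rw [abs_mul, abs_of_nonneg hm]
      _ ≤ mollK ρ ε (x - y) * (Cφ * |u x - z| + |φ x - φ y| * c₂) :=
            mul_le_mul_of_nonneg_left hinner hm
      _ = Cφ * (mollK ρ ε (x - y) * |u x - z|) + (mollK ρ ε (x - y) * |φ x - φ y|) * c₂ := by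
            ring
    rw [hsubeq]
    calc ‖∫ x, (φ x * (mollK ρ ε (x - y) * Ffun f y (u x)) - mollK ρ ε (x - y) * L)‖ ≤
        ∫ x, (Cφ * (mollK ρ ε (x - y) * |u x - z|) +
          (mollK ρ ε (x - y) * |φ x - φ y|) * c₂) :=
          norm_integral_le_of_norm_le hgint (ae_of_all _ hptw)
    _ = Cφ * A' ε + B' ε * c₂ := by
        rw [integral_add (hg1.const_mul Cφ) (hg2.mul_const c₂),
          integral_const_mul, integral_mul_const]
  -- conclude
  rw [tendsto_iff_norm_sub_tendsto_zero]
  have hup : Tendsto (fun ε => Cφ * A' ε + B' ε * c₂) (𝓝[>](0:ℝ)) (𝓝 0) := by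
    have := (hA.const_mul Cφ).add (hB.mul_const c₂)
    simpa using this
  apply tendsto_of_tendsto_of_tendsto_of_le_of_le' tendsto_const_nhds hup
    (Eventually.of_forall fun ε => norm_nonneg _) key

end MollAux


set_option maxHeartbeats 2000000 in

/-- convergence step `(f:ie)` in the proof of Theorem
`chainb3`: with `Div_x B_ε(·,t) = ρ_ε * (F(·,t)σ)`, `u ∈ W^{1,1}_loc ∩ L^∞_loc`
and `φ ∈ C_c^∞(ℝ^N)`,
`∫ φ(x) Div_x B_ε(x,u(x)) dx → ∫ φ(x) F(x, ũ(x)) dσ(x)` as `ε → 0⁺`. -/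
theorem mollified_divergence_convergence {N : ℕ}
    (b : Euc N → ℝ → Euc N)
    (σ : Measure (Euc N)) (f : Euc N → ℝ → ℝ) (M : ℝ)
    (H : DivAssumptions univ b σ f) (hM : ∀ x t, ‖b x t‖ ≤ M)
    (u : Euc N → ℝ) (gradu : Euc N → Euc N) (ut : Euc N → ℝ)
    (hu : LocallyIntegrableOn u univ) (hgrad : LocallyIntegrableOn gradu univ)
    (hub : LocBddOn univ u)
    (hW11 : ∀ φ : Euc N → ℝ, TestFun univ φ →
      (∫ x, u x • gradient φ x) = -∫ x, φ x • gradu x)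
    (hut : ∀ᵐ x ∂σ, ApproxLimitAt u x (ut x))
    (ρ : Euc N → ℝ) (hρ : IsMollifier ρ)
    (φ : Euc N → ℝ) (hφ : TestFun univ φ) :
    Tendsto (fun ε : ℝ =>
        ∫ x, φ x * ∫ y, mollK ρ ε (x - y) * Ffun f y (u x) ∂σ)
      (𝓝[>] (0:ℝ)) (𝓝 (∫ x, φ x * Ffun f x (ut x) ∂σ)) := by
  classical
  haveI hLF : IsLocallyFiniteMeasure σ :=
    ⟨fun x => ⟨closedBall x 1, closedBall_mem_nhds x one_pos,
      H.locFin_σ _ (subset_univ _) (isCompact_closedBall x 1)⟩⟩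
  have hφc : Continuous φ := hφ.1.continuous
  set K := tsupport φ with hKdef
  have hKc : IsCompact K := hφ.2.1
  have hKm : MeasurableSet K := (isClosed_tsupport φ).measurableSet
  set K₁ := Metric.cthickening 1 K with hK₁def
  have hK₁c : IsCompact K₁ := hKc.cthickening
  have hK₁m : MeasurableSet K₁ := isClosed_cthickening.measurableSet
  have hσK₁ : σ K₁ < ⊤ := H.locFin_σ K₁ (subset_univ _) hK₁c
  -- bounds
  obtain ⟨Cφ₀, hCφ₀⟩ := hφc.bounded_above_of_compact_support hφ.2.1
  set Cφ := max Cφ₀ 0 with hCφdef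
  have hCφ : ∀ x, |φ x| ≤ Cφ := fun x => le_trans
    (by rw [← Real.norm_eq_abs]; exact hCφ₀ x) (le_max_left _ _)
  have hCφ0 : 0 ≤ Cφ := le_max_right _ _
  have hρcs : HasCompactSupport ρ :=
    HasCompactSupport.of_support_subset_isCompact (isCompact_closedBall (0:Euc N) 1)
      (subset_trans (subset_tsupport ρ) hρ.supp)
  obtain ⟨Cρ₀, hCρ₀⟩ := hρ.smooth.continuous.bounded_above_of_compact_support hρcs
  set Cρ := max Cρ₀ 0 with hCρdef
  have hCρ : ∀ z, ρ z ≤ Cρ := fun z => le_trans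
    (le_trans (le_abs_self _) (by rw [← Real.norm_eq_abs]; exact hCρ₀ z)) (le_max_left _ _)
  obtain ⟨Cu₀, hCu₀⟩ := hub K (subset_univ _) hKc
  set Cu := max Cu₀ 0 with hCudef
  have hCu0 : 0 ≤ Cu := le_max_right _ _
  have hCu : ∀ᵐ x, x ∈ K → |u x| ≤ Cu := by
    have h1 : ∀ᵐ x ∂(volume.restrict K), |u x| ≤ Cu :=
      hCu₀.mono fun x hx => le_trans hx (le_max_left _ _)
    exact (ae_restrict_iff' hKm).1 h1
  -- u measurability
  have hui : LocallyIntegrable u volume := locallyIntegrableOn_univ.mp hu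
  have huae : AEStronglyMeasurable u volume := hui.aestronglyMeasurable
  set u₀ := huae.mk u with hu₀def
  have hu₀m : Measurable u₀ := huae.stronglyMeasurable_mk.measurable
  have hueq : u =ᵐ[volume] u₀ := huae.ae_eq_mk
  -- σ-a.e. one-bound on f
  have hOne : ∀ᵐ y ∂σ, ∀ᵐ s : ℝ, |f y s| ≤ 1 := by
    set A : Set (Euc N × ℝ) := {p | 1 < |Function.uncurry f p|} with hAdef
    have hAm : MeasurableSet A := measurableSet_lt measurable_const H.meas_f.abs
    have hA0 : (σ.prod volume) A = 0 := by
      rw [Measure.prod_apply_symm hAm]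
      have hz : ∀ s : ℝ, σ ((fun y => (y, s)) ⁻¹' A) = 0 := by
        intro s
        have hbf : ∀ᵐ y ∂σ, |f y s| ≤ 1 := H.bound_f s
        rw [ae_iff] at hbf
        convert hbf using 2
        ext y
        simp [hAdef, Function.uncurry, not_le]
      simp [hz]
    have hsec := (Measure.measure_prod_null hAm).1 hA0
    rw [Filter.EventuallyEq] at hsec
    filter_upwards [hsec] with y hy
    simp only [Pi.zero_apply] at hy
    rw [ae_iff]
    convert hy using 2
    ext s
    simp [hAdef, Function.uncurry, not_le]
  -- integrability on the product, for 0 < ε ≤ 1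
  have hmKint : ∀ ε : ℝ, 0 < ε → ε ≤ 1 →
      Integrable (Function.uncurry (fun x y : Euc N =>
        φ x * (mollK ρ ε (x - y) * Ffun f y (u x)))) (volume.prod σ) := by
    intro ε hε0 hε1
    rw [Function.uncurry_def]
    have hmKc : Continuous fun p : Euc N × Euc N => mollK ρ ε (p.1 - p.2) :=
      (MollAux.contK hρ ε).comp (continuous_fst.sub continuous_snd)
    have hFm : Measurable (Function.uncurry (Ffun f)) := MollAux.meas_Ffun H.meas_f
    have hqf : Measure.QuasiMeasurePreserving (Prod.fst : Euc N × Euc N → Euc N)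
        (volume.prod σ) volume := Measure.quasiMeasurePreserving_fst
    have hH0m : AEStronglyMeasurable (fun p : Euc N × Euc N =>
        φ p.1 * (mollK ρ ε (p.1 - p.2) * Ffun f p.2 (u p.1))) (volume.prod σ) := by
      obtain ⟨G, hGm, hGeq⟩ : ∃ G : Euc N × ℝ → ℝ, Measurable G ∧
          G = Function.uncurry (Ffun f) := ⟨_, hFm, rfl⟩
      have hfun : (fun p : Euc N × Euc N =>
          φ p.1 * (mollK ρ ε (p.1 - p.2) * Ffun f p.2 (u p.1))) =
          fun p => φ p.1 * (mollK ρ ε (p.1 - p.2) * G (p.2, u p.1)) := by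
        rw [hGeq]; rfl
      rw [hfun]
      have hu1 : AEMeasurable (fun p : Euc N × Euc N => u p.1) (volume.prod σ) :=
        huae.aemeasurable.comp_quasiMeasurePreserving hqf
      have hFcomp : AEMeasurable (fun p : Euc N × Euc N => G (p.2, u p.1))
          (volume.prod σ) :=
        hGm.comp_aemeasurable (measurable_snd.aemeasurable.prodMk hu1)
      exact (hφc.aestronglyMeasurable.comp_measurable measurable_fst).mul
        (hmKc.aestronglyMeasurable.mul hFcomp.aestronglyMeasurable)
    have hbb : Integrable ((K ×ˢ K₁).indicator
        (fun _ => Cφ * ((ε^N)⁻¹ * Cρ * Cu))) (volume.prod σ) := by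
      apply MeasureTheory.IntegrableOn.integrable_indicator _ (hKm.prod hK₁m)
      refine integrableOn_const (LT.lt.ne ?_)
      rw [Measure.prod_prod]
      exact ENNReal.mul_lt_top hKc.measure_lt_top hσK₁
    apply Integrable.mono' hbb hH0m
    have hCu2 : ∀ᵐ p ∂(volume.prod σ), p.1 ∈ K → |u p.1| ≤ Cu := hqf.ae hCu
    have hqs : Measure.QuasiMeasurePreserving (Prod.snd : Euc N × Euc N → Euc N)
        (volume.prod σ) σ := Measure.quasiMeasurePreserving_snd
    have hOne2 : ∀ᵐ p ∂(volume.prod σ), ∀ᵐ s : ℝ, |f p.2 s| ≤ 1 := hqs.ae hOne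
    have hCρ0 : 0 ≤ Cρ := le_trans (hρ.nonneg 0) (hCρ 0)
    have hind_nonneg : ∀ p : Euc N × Euc N,
        0 ≤ (K ×ˢ K₁).indicator (fun _ => Cφ * ((ε^N)⁻¹ * Cρ * Cu)) p := by
      intro p
      apply Set.indicator_nonneg
      intro _ _
      positivity
    filter_upwards [hCu2, hOne2] with p hp1 hp2
    by_cases h0 : φ p.1 = 0
    · rw [Real.norm_eq_abs, h0, zero_mul, abs_zero]; exact hind_nonneg p
    by_cases hm0 : mollK ρ ε (p.1 - p.2) = 0
    · rw [Real.norm_eq_abs, hm0, zero_mul, mul_zero, abs_zero]; exact hind_nonneg p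
    have hp1K : p.1 ∈ K := subset_tsupport φ (mem_support.2 h0)
    have hdist : ‖p.1 - p.2‖ ≤ ε := by
      by_contra hc
      exact hm0 (MollAux.K_zero_of hρ hε0 hc)
    have hp2K : p.2 ∈ K₁ := by
      apply mem_cthickening_of_dist_le p.2 p.1 1 K hp1K
      rw [dist_eq_norm, norm_sub_rev]
      linarith
    rw [Set.indicator_of_mem (Set.mem_prod.2 ⟨hp1K, hp2K⟩)]
    rw [Real.norm_eq_abs, abs_mul, abs_mul]
    have hF : |Ffun f p.2 (u p.1)| ≤ Cu :=
      le_trans (MollAux.Ffun_abs_le H.meas_f hp2 _) (hp1 hp1K)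
    have hmabs : |mollK ρ ε (p.1 - p.2)| ≤ (ε^N)⁻¹ * Cρ := by
      rw [abs_of_nonneg (MollAux.K_nonneg hρ hε0 _)]
      exact MollAux.K_le hρ hε0 hCρ _
    exact mul_le_mul (hCφ _) (mul_le_mul hmabs hF (abs_nonneg _) (by positivity))
      (by positivity) hCφ0
  -- Fubini: eventual equality
  have hswap : ∀ᶠ ε in 𝓝[>](0:ℝ),
      (∫ x, φ x * ∫ y, mollK ρ ε (x - y) * Ffun f y (u x) ∂σ)
        = ∫ y, (∫ x, φ x * (mollK ρ ε (x - y) * Ffun f y (u x))) ∂σ := by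
    filter_upwards [Ioc_mem_nhdsGT_of_mem (Set.mem_Ico.2 ⟨le_refl (0:ℝ), one_pos⟩)]
      with ε hε
    obtain ⟨hε0, hε1⟩ := hε
    have h1 : (fun x => φ x * ∫ y, mollK ρ ε (x - y) * Ffun f y (u x) ∂σ) =
        fun x => ∫ y, φ x * (mollK ρ ε (x - y) * Ffun f y (u x)) ∂σ :=
      funext fun x => (integral_const_mul _ _).symm
    rw [h1]
    exact integral_integral_swap (hmKint ε hε0 hε1)
  -- dominated convergence
  have hDCT : Tendsto (fun ε : ℝ =>
      ∫ y, (∫ x, φ x * (mollK ρ ε (x - y) * Ffun f y (u x))) ∂σ)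
      (𝓝[>](0:ℝ)) (𝓝 (∫ y, φ y * Ffun f y (ut y) ∂σ)) := by
    refine tendsto_integral_filter_of_dominated_convergence (μ := σ)
      (F := fun (ε : ℝ) (y : Euc N) => ∫ x, φ x * (mollK ρ ε (x - y) * Ffun f y (u x)))
      (f := fun y : Euc N => φ y * Ffun f y (ut y))
      (K₁.indicator fun _ => Cφ * Cu) ?_ ?_ ?_ ?_
    · -- measurability
      filter_upwards [Ioc_mem_nhdsGT_of_mem (Set.mem_Ico.2 ⟨le_refl (0:ℝ), one_pos⟩)]
        with ε hε
      exact ((hmKint ε hε.1 hε.2).integral_prod_right).aestronglyMeasurable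
    · -- uniform bound
      filter_upwards [Ioc_mem_nhdsGT_of_mem (Set.mem_Ico.2 ⟨le_refl (0:ℝ), one_pos⟩)]
        with ε hε
      obtain ⟨hε0, hε1⟩ := hε
      filter_upwards [hOne] with y hy2
      by_cases hyK : y ∈ K₁
      · rw [Set.indicator_of_mem hyK]
        have hIg : Integrable (fun x => mollK ρ ε (x - y) * (Cφ * Cu)) :=
          ((MollAux.intK hρ hε0).comp_sub_right y).mul_const _
        have hb : ∀ᵐ x, ‖φ x * (mollK ρ ε (x - y) * Ffun f y (u x))‖ ≤
            mollK ρ ε (x - y) * (Cφ * Cu) := by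
          filter_upwards [hCu] with x hx
          by_cases h0 : φ x = 0
          · rw [h0, zero_mul, norm_zero]
            exact mul_nonneg (MollAux.K_nonneg hρ hε0 _) (by positivity)
          · have hxK : x ∈ K := subset_tsupport φ (mem_support.2 h0)
            have hF : |Ffun f y (u x)| ≤ Cu :=
              (MollAux.Ffun_abs_le H.meas_f hy2 _).trans (hx hxK)
            rw [Real.norm_eq_abs, abs_mul, abs_mul,
              abs_of_nonneg (MollAux.K_nonneg hρ hε0 _)]
            calc |φ x| * (mollK ρ ε (x - y) * |Ffun f y (u x)|) =
                mollK ρ ε (x - y) * (|φ x| * |Ffun f y (u x)|) := by ring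
            _ ≤ mollK ρ ε (x - y) * (Cφ * Cu) :=
                mul_le_mul_of_nonneg_left
                  (mul_le_mul (hCφ x) hF (abs_nonneg _) hCφ0)
                  (MollAux.K_nonneg hρ hε0 _)
        calc ‖∫ x, φ x * (mollK ρ ε (x - y) * Ffun f y (u x))‖ ≤
            ∫ x, mollK ρ ε (x - y) * (Cφ * Cu) := norm_integral_le_of_norm_le hIg hb
        _ = Cφ * Cu := by
            rw [integral_mul_const, MollAux.integralK_shift hρ hε0, one_mul]
      · rw [Set.indicator_of_notMem hyK]
        have hz : (fun x => φ x * (mollK ρ ε (x - y) * Ffun f y (u x))) =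
            fun _ => 0 := by
          funext x
          by_cases h0 : φ x = 0
          · rw [h0, zero_mul]
          · have hxK : x ∈ K := subset_tsupport φ (mem_support.2 h0)
            have hm : mollK ρ ε (x - y) = 0 := by
              apply MollAux.K_zero_of hρ hε0
              intro hle
              apply hyK
              apply mem_cthickening_of_dist_le y x 1 K hxK
              rw [dist_eq_norm, norm_sub_rev]
              linarith
            rw [hm, zero_mul, mul_zero]
        rw [hz, integral_zero, norm_zero]
    · -- integrable bound
      exact MeasureTheory.IntegrableOn.integrable_indicator
        (integrableOn_const hσK₁.ne) hK₁m
    · -- pointwise convergence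
      filter_upwards [hut, hOne] with y hy1 hy2
      apply MollAux.pointwise_conv hρ hCρ hui H.meas_f hφc hCφ hy1 hy2
        (C₀ := Cφ * Cu)
      filter_upwards [hCu] with x hx
      by_cases h0 : φ x = 0
      · rw [h0, zero_mul, abs_zero]; positivity
      · have hxK : x ∈ K := subset_tsupport φ (mem_support.2 h0)
        rw [abs_mul]
        exact mul_le_mul (hCφ x)
          ((MollAux.Ffun_abs_le H.meas_f hy2 (u x)).trans (hx hxK))
          (abs_nonneg _) hCφ0
  exact Tendsto.congr' (hswap.mono fun ε h => h.symm) hDCT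
end
end
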